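/- Let S be a complete separable metric space, let Γ ⊂ C_b(S) be admissible, and let f ∈ F₁(a,b) be admissible with a ≥ 0 and f* continuously differentiable on ℝ. Fix Borel probability measures Q, P on S and suppose g* ∈ Γ and ν* ∈ ℝ satisfy: (1) f((f*)'(g* − ν*)) ∈ L¹(P); (2) E_P[(f*)'(g* − ν*)] = 1; and (3) W^Γ(Q, η*) = E_Q[g*] − E_{η*}[g*], where dη* := (f*)'(g* − ν*) dP. Then η* is a Borel probability measure that attains the infimum inf over probability measures η of {D_f(η‖P) + W^Γ(Q,η)}, and D_f^Γ(Q‖P) = E_Q[g*] − (ν* + E_P[f*(g* − ν*)]). If f is strictly convex on (a,b) then η* is the unique minimizer. -/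

import Mathlib

open MeasureTheory Filter Set Topology ENNReal
open scoped Classical

noncomputable section

/-- The set of bounded measurable real-valued functions on `Ω`. -/
def Mb (Ω : Type*) [MeasurableSpace Ω] : Set (Ω → ℝ) :=
  {g | Measurable g ∧ ∃ C : ℝ, ∀ x, |g x| ≤ C}

/-- The set of bounded continuous real-valued functions on `S`. -/
def Cb (S : Type*) [TopologicalSpace S] : Set (S → ℝ) :=
  {g | Continuous g ∧ ∃ C : ℝ, ∀ x, |g x| ≤ C}

/-- The positive part of an extended real number, as an element of `ℝ≥0∞`. -/
def posE (x : EReal) : ℝ≥0∞ := if x = ⊤ then ⊤ else ENNReal.ofReal x.toReal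

/-- The extended-real-valued integral of an `EReal`-valued function, defined as the
difference of the lower integrals of the positive and negative parts, with the
convention `∞ - ∞ = -∞`. -/
def eIntegral {Ω : Type*} [MeasurableSpace Ω] (P : Measure Ω) (h : Ω → EReal) : EReal :=
  ((∫⁻ x, posE (h x) ∂P : ℝ≥0∞) : EReal) - ((∫⁻ x, posE (-(h x)) ∂P : ℝ≥0∞) : EReal)

/-- The Legendre transform `f*(y) = sup_x {x*y - f(x)}` of `f : ℝ → (-∞,∞]`. -/
def fstar (f : ℝ → EReal) (y : ℝ) : EReal := ⨆ x : ℝ, (((x * y : ℝ) : EReal) - f x)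

/-- `f : ℝ → (-∞,∞]` is (the convex LSC extension of) an element of `F₁(a,b)`:
convex, lower semicontinuous, never `-∞`, finite exactly on the interval `(a,b)`
(with `+∞` strictly outside `[a,b]`), and `f(1) = 0` with `a < 1 < b`. -/
structure IsF1 (a b : EReal) (f : ℝ → EReal) : Prop where
  a_lt_one : a < ((1 : ℝ) : EReal)
  one_lt_b : ((1 : ℝ) : EReal) < b
  convex : ∀ x y t : ℝ, 0 < t → t < 1 →
    f (t * x + (1 - t) * y) ≤ ((t : ℝ) : EReal) * f x + (((1 - t : ℝ)) : EReal) * f y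
  lsc : LowerSemicontinuous f
  ne_bot : ∀ x, f x ≠ ⊥
  finite_on : ∀ x : ℝ, a < (x : EReal) → (x : EReal) < b → f x ≠ ⊤
  top_outside : ∀ x : ℝ, ((x : EReal) < a ∨ b < (x : EReal)) → f x = ⊤
  at_one : f 1 = 0

/-- `Λ_f^P[g] = inf_{ν ∈ ℝ} {ν + E_P[f*(g - ν)]}`. -/
def LambdaF {Ω : Type*} [MeasurableSpace Ω] (f : ℝ → EReal) (P : Measure Ω) (g : Ω → ℝ) :
    EReal :=
  ⨅ ν : ℝ, ((ν : EReal) + eIntegral P (fun x => fstar f (g x - ν)))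

/-- The classical `f`-divergence `D_f(Q‖P) = E_P[f(dQ/dP)]` if `Q ≪ P`, else `∞`. -/
def fDivE {Ω : Type*} [MeasurableSpace Ω] (f : ℝ → EReal) (Q P : Measure Ω) : EReal :=
  if Q ≪ P then eIntegral P (fun x => f ((Q.rnDeriv P x).toReal)) else ⊤

/-- The `(f,Γ)`-divergence `D_f^Γ(Q‖P) = sup_{g ∈ Γ} {E_Q[g] - Λ_f^P[g]}`. -/
def fGammaDiv {Ω : Type*} [MeasurableSpace Ω] (f : ℝ → EReal) (Γ : Set (Ω → ℝ))
    (Q P : Measure Ω) : EReal :=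
  ⨆ g ∈ Γ, (((∫ x, g x ∂Q : ℝ) : EReal) - LambdaF f P g)

/-- The `Γ`-IPM `W^Γ(Q,P) = sup_{g ∈ Γ} {E_Q[g] - E_P[g]}`. -/
def ipmW {Ω : Type*} [MeasurableSpace Ω] (Γ : Set (Ω → ℝ)) (Q P : Measure Ω) : EReal :=
  ⨆ g ∈ Γ, (((∫ x, g x ∂Q : ℝ) : EReal) - ((∫ x, g x ∂P : ℝ) : EReal))


/-- Integration of a function against a finite signed measure, via the Jordan
decomposition. -/
def signedIntegral {S : Type*} [MeasurableSpace S] (μ : MeasureTheory.SignedMeasure S)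
    (g : S → ℝ) : ℝ :=
  (∫ x, g x ∂μ.toJordanDecomposition.posPart) - ∫ x, g x ∂μ.toJordanDecomposition.negPart

/-- The weak topology on real-valued functions on `S` generated by the maps
`g ↦ ∫ g dμ` for all finite signed (Borel) measures `μ` on `S`. -/
def weakTop (S : Type*) [MeasurableSpace S] : TopologicalSpace (S → ℝ) :=
  ⨅ μ : MeasureTheory.SignedMeasure S,
    TopologicalSpace.induced (fun g => signedIntegral μ g) inferInstance

/-- A set `Ψ` of functions is `P(S)`-determining: if two probability measures give the
same integral to every `ψ ∈ Ψ`, then they are equal. -/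
def Determining {S : Type*} [MeasurableSpace S] (Ψ : Set (S → ℝ)) : Prop :=
  ∀ Q P : Measure S, IsProbabilityMeasure Q → IsProbabilityMeasure P →
    (∀ ψ ∈ Ψ, (∫ x, ψ x ∂Q) = ∫ x, ψ x ∂P) → Q = P

/-- `Γ ⊆ C_b(S)` is admissible: it contains `0`, is convex, and is closed in `C_b(S)` for
the weak topology generated by the finite signed measures. -/
def AdmissibleGamma {S : Type*} [TopologicalSpace S] [MeasurableSpace S]
    (Γ : Set (S → ℝ)) : Prop :=
  (fun _ => (0 : ℝ)) ∈ Γ ∧ Convex ℝ Γ ∧ Γ ⊆ Cb S ∧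
    ∀ g ∈ Cb S, g ∈ @closure _ (weakTop S) Γ → g ∈ Γ

/-- `Γ` is strictly admissible: there is a `P(S)`-determining set `Ψ ⊆ C_b(S)` such that
for all `ψ ∈ Ψ` there are `c ∈ ℝ` and `ε > 0` with `c ± εψ ∈ Γ`. -/
def StrictlyAdmissibleGamma {S : Type*} [TopologicalSpace S] [MeasurableSpace S]
    (Γ : Set (S → ℝ)) : Prop :=
  ∃ Ψ : Set (S → ℝ), Ψ ⊆ Cb S ∧ Determining Ψ ∧
    ∀ ψ ∈ Ψ, ∃ c ε : ℝ, 0 < ε ∧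
      (fun x => c + ε * ψ x) ∈ Γ ∧ (fun x => c - ε * ψ x) ∈ Γ

/-- `f` is admissible: `f*` is finite everywhere and `lim_{y → -∞} f*(y) < ∞`. -/
def AdmissibleF (f : ℝ → EReal) : Prop :=
  (∀ y : ℝ, fstar f y ≠ ⊤) ∧ ∃ M : ℝ, ∀ᶠ y in Filter.atBot, fstar f y ≤ (M : EReal)

/-- `f` is strictly convex at `1`: `f` is not affine on any neighborhood of `1`. -/
def StrictlyConvexAtOne (f : ℝ → EReal) : Prop :=
  ∀ ε : ℝ, 0 < ε → ¬ ∃ m q : ℝ, ∀ x : ℝ, |x - 1| < ε → f x = ((m * x + q : ℝ) : EReal)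

/-- `f` is strictly convex on the interval `(a,b)` (with `a, b ∈ [-∞,∞]`). -/
def StrictConvexOnAB (a b : EReal) (f : ℝ → EReal) : Prop :=
  ∀ x y t : ℝ, a < (x : EReal) → (x : EReal) < b → a < (y : EReal) → (y : EReal) < b →
    x ≠ y → 0 < t → t < 1 →
    f (t * x + (1 - t) * y) < ((t : ℝ) : EReal) * f x + (((1 - t : ℝ)) : EReal) * f y


/-- The candidate optimizer `dη* = (f*)'(g - ν) dP` of the infimal convolution problem. -/
def etaStar {S : Type*} [MeasurableSpace S] (f : ℝ → EReal) (P : Measure S)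
    (g : S → ℝ) (ν : ℝ) : Measure S :=
  P.withDensity fun x => ENNReal.ofReal (deriv (fun y => (fstar f y).toReal) (g x - ν))

end
noncomputable section AuxA

open Filter Set Topology

variable {a b : EReal} {f : ℝ → EReal}

lemma fstar_ge (hf : IsF1 a b f) (y : ℝ) : (y : EReal) ≤ fstar f y := by
  have h := le_iSup (fun x : ℝ => ((x * y : ℝ) : EReal) - f x) 1
  simp only [one_mul, hf.at_one] at h
  rw [sub_zero] at h
  exact h

lemma fstar_ne_bot (hf : IsF1 a b f) (y : ℝ) : fstar f y ≠ ⊥ := by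
  intro h
  simpa [h] using fstar_ge hf y

lemma fstar_eq_coe (hf : IsF1 a b f) (hfin : ∀ y, fstar f y ≠ ⊤) (y : ℝ) :
    fstar f y = (((fstar f y).toReal : ℝ) : EReal) :=
  (EReal.coe_toReal (hfin y) (fstar_ne_bot hf y)).symm

lemma term_le (f : ℝ → EReal) (x y : ℝ) : ((x * y : ℝ) : EReal) - f x ≤ fstar f y :=
  le_iSup (fun x : ℝ => ((x * y : ℝ) : EReal) - f x) x

lemma term_le_real (hf : IsF1 a b f) (hfin : ∀ y, fstar f y ≠ ⊤) {x y F : ℝ}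
    (hF : f x = ((F : ℝ) : EReal)) : x * y - F ≤ (fstar f y).toReal := by
  have h := term_le f x y
  rw [hF, fstar_eq_coe hf hfin y, ← EReal.coe_sub, EReal.coe_le_coe_iff] at h
  linarith

lemma FY_ineq (hf : IsF1 a b f) (hfin : ∀ y, fstar f y ≠ ⊤) (r y : ℝ) :
    ((r * y - (fstar f y).toReal : ℝ) : EReal) ≤ f r := by
  rcases eq_or_ne (f r) ⊤ with h | h
  · simp [h]
  · have hF : f r = (((f r).toReal : ℝ) : EReal) := (EReal.coe_toReal h (hf.ne_bot r)).symm
    have := term_le_real hf hfin (y := y) hF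
    rw [hF, EReal.coe_le_coe_iff]
    linarith

end AuxA
noncomputable section AuxB

open Filter Set Topology

variable {a b : EReal} {f : ℝ → EReal}

set_option maxHeartbeats 1000000 in
lemma FY_eq (hf : IsF1 a b f) (hfin : ∀ y, fstar f y ≠ ⊤) (y : ℝ)
    (hderiv : DifferentiableAt ℝ (fun z => (fstar f z).toReal) y) :
    f (deriv (fun z => (fstar f z).toReal) y)
      = ((deriv (fun z => (fstar f z).toReal) y * y - (fstar f y).toReal : ℝ) : EReal) := by
  set φ : ℝ → ℝ := fun z => (fstar f z).toReal with hφdef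
  set x₀ : ℝ := deriv φ y with hx₀def
  refine le_antisymm ?_ (FY_ineq hf hfin x₀ y)
  by_contra hlt
  push_neg at hlt
  obtain ⟨c, hc₀c, hcf⟩ := EReal.lt_iff_exists_real_btwn.mp hlt
  rw [EReal.coe_lt_coe_iff] at hc₀c
  set c₀ : ℝ := x₀ * y - φ y with hc₀def
  obtain ⟨δ, hδpos, hδ⟩ := Metric.eventually_nhds_iff.mp (hf.lsc x₀ (c : EReal) hcf)
  set e : ℝ := c - c₀ with hedef
  have hepos : 0 < e := by simp only [hedef]; linarith
  set δ₂ : ℝ := min (δ / 2) (e / (4 * (|y| + 1))) with hδ₂def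
  have hδ₂pos : 0 < δ₂ := lt_min (by linarith) (by positivity)
  have hδ₂y : 2 * δ₂ * |y| ≤ e / 2 := by
    have h1 : δ₂ ≤ e / (4 * (|y| + 1)) := min_le_right _ _
    have h2 : 0 ≤ |y| := abs_nonneg y
    have h3 : (0:ℝ) < 4 * (|y| + 1) := by positivity
    rw [le_div_iff₀ h3] at h1
    nlinarith
  have hδ₂δ : 2 * δ₂ ≤ δ := by
    have h := min_le_left (δ / 2) (e / (4 * (|y| + 1)))
    linarith [h]
  have hslope : Tendsto (slope φ y) (𝓝[≠] y) (𝓝 x₀) :=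
    hasDerivAt_iff_tendsto_slope.mp hderiv.hasDerivAt
  have hev : ∀ᶠ z in 𝓝[≠] y, |slope φ y z - x₀| < δ₂ := by
    have h := Metric.tendsto_nhds.mp hslope δ₂ hδ₂pos
    simpa [Real.dist_eq] using h
  have hmono₁ : 𝓝[>] y ≤ 𝓝[≠] y :=
    nhdsWithin_mono y fun z (hz : z ∈ Ioi y) => (LT.lt.ne' hz : z ≠ y)
  have hmono₂ : 𝓝[<] y ≤ 𝓝[≠] y :=
    nhdsWithin_mono y fun z (hz : z ∈ Iio y) => (LT.lt.ne hz : z ≠ y)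
  obtain ⟨z₁, hz₁b, hz₁y⟩ := ((hev.filter_mono hmono₁).and eventually_mem_nhdsWithin).exists
  obtain ⟨z₂, hz₂b, hz₂y⟩ := ((hev.filter_mono hmono₂).and eventually_mem_nhdsWithin).exists
  rw [mem_Ioi] at hz₁y
  rw [mem_Iio] at hz₂y
  have htpos : 0 < z₁ - y := by linarith
  have hspos : 0 < y - z₂ := by linarith
  set ε : ℝ := min (e / 4) (min (δ₂ * (z₁ - y)) (δ₂ * (y - z₂))) with hεdef
  have hεpos : 0 < ε := lt_min (by linarith) (lt_min (by positivity) (by positivity))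
  have hεe : ε ≤ e / 4 := min_le_left _ _
  have hεt : ε ≤ δ₂ * (z₁ - y) := le_trans (min_le_right _ _) (min_le_left _ _)
  have hεs : ε ≤ δ₂ * (y - z₂) := le_trans (min_le_right _ _) (min_le_right _ _)
  -- near maximizer
  have hlt' : ((φ y - ε : ℝ) : EReal) < ⨆ x : ℝ, (((x * y : ℝ) : EReal) - f x) := by
    rw [show (⨆ x : ℝ, (((x * y : ℝ) : EReal) - f x)) = fstar f y from rfl,
      fstar_eq_coe hf hfin y, EReal.coe_lt_coe_iff]
    simp only [hφdef]
    linarith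
  obtain ⟨x', hx'⟩ := lt_iSup_iff.mp hlt'
  rcases eq_or_ne (f x') ⊤ with htop | hfx'top
  · rw [htop] at hx'
    have hbot : ((x' * y : ℝ) : EReal) - ⊤ = ⊥ := rfl
    rw [hbot] at hx'
    exact absurd hx' not_lt_bot
  have hF' : f x' = (((f x').toReal : ℝ) : EReal) := (EReal.coe_toReal hfx'top (hf.ne_bot x')).symm
  set F' : ℝ := (f x').toReal with hF'def
  rw [hF', ← EReal.coe_sub, EReal.coe_lt_coe_iff] at hx'
  -- hx' : φ y - ε < x' * y - F'
  -- slope bounds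
  have hsl₁ : φ z₁ - φ y < (x₀ + δ₂) * (z₁ - y) := by
    have h := (abs_lt.mp hz₁b).2
    rw [slope_def_field, sub_lt_iff_lt_add, div_lt_iff₀ htpos] at h
    nlinarith [h]
  have hsl₂ : (x₀ - δ₂) * (y - z₂) < φ y - φ z₂ := by
    have h := (abs_lt.mp hz₂b).1
    rw [slope_def_field, neg_lt, neg_sub, sub_lt_iff_lt_add] at h
    have h2 : (φ z₂ - φ y) / (z₂ - y) = (φ y - φ z₂) / (y - z₂) := by
      rw [div_eq_div_iff (by linarith) (by linarith)]; ring
    rw [h2] at h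
    have h3 : x₀ - δ₂ < (φ y - φ z₂) / (y - z₂) := by linarith
    rw [lt_div_iff₀ hspos] at h3
    linarith
  -- bounds on x'
  have hub : x' < x₀ + 2 * δ₂ := by
    have h1 : x' * z₁ - F' ≤ φ z₁ := term_le_real hf hfin hF'
    have hkey : x' * (z₁ - y) < (x₀ + 2 * δ₂) * (z₁ - y) := by nlinarith
    exact lt_of_mul_lt_mul_right hkey htpos.le
  have hlb : x₀ - 2 * δ₂ < x' := by
    have h1 : x' * z₂ - F' ≤ φ z₂ := term_le_real hf hfin hF'
    have hkey : (x₀ - 2 * δ₂) * (y - z₂) < x' * (y - z₂) := by nlinarith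
    exact lt_of_mul_lt_mul_right hkey hspos.le
  -- x' within δ of x₀, so lsc gives c < F'
  have hdist : dist x' x₀ < δ := by
    rw [Real.dist_eq, abs_lt]
    constructor <;> linarith
  have hcF' : (c : EReal) < f x' := hδ hdist
  rw [hF', EReal.coe_lt_coe_iff] at hcF'
  -- but F' is small
  have hxy : x' * y ≤ x₀ * y + 2 * δ₂ * |y| := by
    have habs : |x' - x₀| ≤ 2 * δ₂ := by rw [abs_le]; constructor <;> linarith
    have h2 : (x' - x₀) * y ≤ |x' - x₀| * |y| := (le_abs_self _).trans (abs_mul _ _).le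
    nlinarith [abs_nonneg y, mul_le_mul_of_nonneg_right habs (abs_nonneg y)]
  have hfinal : F' < c := by
    have h1 : F' < x' * y - φ y + ε := by linarith
    have h2 : x' * y - φ y + ε ≤ c₀ + e / 2 + e / 4 := by
      simp only [hc₀def]; linarith
    have h3 : c₀ + e / 2 + e / 4 < c := by simp only [hedef] at *; linarith
    linarith
  linarith

end AuxB
noncomputable section AuxC

open Filter Set Topology MeasureTheory

variable {a b : EReal} {f : ℝ → EReal}

lemma mem_dom_of_FY (hf : IsF1 a b f) {r : ℝ} (hr : f r ≠ ⊤) :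
    a ≤ (r : EReal) ∧ (r : EReal) ≤ b := by
  by_contra h
  push_neg at h
  apply hr
  apply hf.top_outside
  by_cases h1 : a ≤ (r : EReal)
  · exact Or.inr (lt_of_not_ge fun hb => absurd hb (not_le.mpr (h h1)))
  · exact Or.inl (lt_of_not_ge h1)

lemma seg_eq (hf : IsF1 a b f) (hfin : ∀ y, fstar f y ≠ ⊤) {y p q : ℝ} (hpq : p < q)
    (hp : f p = ((p * y - (fstar f y).toReal : ℝ) : EReal))
    (hq : f q = ((q * y - (fstar f y).toReal : ℝ) : EReal))
    {z : ℝ} (hz1 : p ≤ z) (hz2 : z ≤ q) :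
    f z = ((z * y - (fstar f y).toReal : ℝ) : EReal) := by
  rcases eq_or_lt_of_le hz1 with rfl | hz1'
  · exact hp
  rcases eq_or_lt_of_le hz2 with rfl | hz2'
  · exact hq
  set t : ℝ := (q - z) / (q - p) with htdef
  have hqp : (0:ℝ) < q - p := by linarith
  have hqz : (0:ℝ) < q - z := by linarith
  have ht0 : 0 < t := div_pos hqz hqp
  have ht1 : t < 1 := by
    rw [htdef, div_lt_one hqp]; linarith
  have hz : z = t * p + (1 - t) * q := by
    have h' : t * (q - p) = q - z := by rw [htdef]; exact div_mul_cancel₀ _ hqp.ne'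
    linear_combination h'
  have hle := hf.convex p q t ht0 ht1
  rw [← hz, hp, hq] at hle
  have hconv : ((t : ℝ) : EReal) * ((p * y - (fstar f y).toReal : ℝ) : EReal)
      + ((1 - t : ℝ) : EReal) * ((q * y - (fstar f y).toReal : ℝ) : EReal)
      = ((z * y - (fstar f y).toReal : ℝ) : EReal) := by
    rw [← EReal.coe_mul, ← EReal.coe_mul, ← EReal.coe_add]
    congr 1
    rw [hz]
    ring
  rw [hconv] at hle
  exact le_antisymm hle (FY_ineq hf hfin z y)

lemma FY_unique (hf : IsF1 a b f) (hfin : ∀ y, fstar f y ≠ ⊤)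
    (hsc : StrictConvexOnAB a b f) {y r r' : ℝ}
    (hr : f r = ((r * y - (fstar f y).toReal : ℝ) : EReal))
    (hr' : f r' = ((r' * y - (fstar f y).toReal : ℝ) : EReal)) : r = r' := by
  have key : ∀ p q : ℝ, p < q →
      f p = ((p * y - (fstar f y).toReal : ℝ) : EReal) →
      f q = ((q * y - (fstar f y).toReal : ℝ) : EReal) → False := by
    intro p q hpq hp hq
    obtain ⟨hap, _⟩ := mem_dom_of_FY hf (hp ▸ EReal.coe_ne_top _)
    obtain ⟨_, hqb⟩ := mem_dom_of_FY hf (hq ▸ EReal.coe_ne_top _)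
    set p₁ : ℝ := p + (q - p) / 4 with hp₁def
    set q₁ : ℝ := q - (q - p) / 4 with hq₁def
    have hpp₁ : p < p₁ := by simp only [hp₁def]; linarith
    have hq₁q : q₁ < q := by simp only [hq₁def]; linarith
    have hp₁q₁ : p₁ < q₁ := by simp only [hp₁def, hq₁def]; linarith
    have hap₁ : a < (p₁ : EReal) := lt_of_le_of_lt hap (EReal.coe_lt_coe_iff.mpr hpp₁)
    have hq₁b : (q₁ : EReal) < b := lt_of_lt_of_le (EReal.coe_lt_coe_iff.mpr hq₁q) hqb
    have hap₁' : a < (q₁ : EReal) := lt_trans hap₁ (EReal.coe_lt_coe_iff.mpr hp₁q₁)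
    have hq₁b' : (p₁ : EReal) < b := lt_trans (EReal.coe_lt_coe_iff.mpr hp₁q₁) hq₁b
    have hfx₁ := seg_eq hf hfin hpq hp hq (le_of_lt hpp₁) (by linarith)
    have hfx₂ := seg_eq hf hfin hpq hp hq (by linarith) (le_of_lt hq₁q)
    have hmid := seg_eq hf hfin hpq hp hq
      (show p ≤ (1/2 : ℝ) * p₁ + (1 - 1/2) * q₁ by norm_num; linarith)
      (show (1/2 : ℝ) * p₁ + (1 - 1/2) * q₁ ≤ q by norm_num; linarith)
    have hstrict := hsc p₁ q₁ (1/2) hap₁ hq₁b' hap₁' hq₁b (ne_of_lt hp₁q₁)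
      (by norm_num) (by norm_num)
    rw [hmid, hfx₁, hfx₂, ← EReal.coe_mul, ← EReal.coe_mul, ← EReal.coe_add,
      EReal.coe_lt_coe_iff] at hstrict
    have : ((1/2 : ℝ) * p₁ + (1 - 1/2) * q₁) * y - (fstar f y).toReal
        = 1/2 * (p₁ * y - (fstar f y).toReal) + (1 - 1/2) * (q₁ * y - (fstar f y).toReal) := by
      ring
    rw [this] at hstrict
    exact lt_irrefl _ hstrict
  rcases lt_trichotomy r r' with h | h | h
  · exact absurd (key r r' h hr hr') not_false
  · exact h
  · exact absurd (key r' r h hr' hr) not_false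

end AuxC
noncomputable section AuxD

open Filter Set Topology MeasureTheory ENNReal

lemma posE_coe (r : ℝ) : posE ((r : ℝ) : EReal) = ENNReal.ofReal r := by
  simp [posE]

lemma posE_neg_coe (r : ℝ) : posE (-((r : ℝ) : EReal)) = ENNReal.ofReal (-r) := by
  rw [← EReal.coe_neg, posE_coe]

lemma posE_mono : Monotone posE := by
  intro x y h
  rcases eq_or_ne y ⊤ with rfl | hy
  · simp [posE]
  rcases eq_or_ne x ⊥ with rfl | hx
  · simp [posE]
  have hx' : x ≠ ⊤ := by rintro rfl; exact hy (top_le_iff.mp h)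
  simp only [posE, if_neg hx', if_neg hy]
  exact ENNReal.ofReal_le_ofReal (EReal.toReal_le_toReal h hx hy)

lemma coe_toReal_ennreal {A : ℝ≥0∞} (h : A ≠ ⊤) : ((A.toReal : ℝ) : EReal) = (A : EReal) := by
  rw [← EReal.toReal_coe_ennreal]
  exact EReal.coe_toReal (by simpa [EReal.coe_ennreal_eq_top_iff] using h)
    (EReal.coe_ennreal_ne_bot A)

lemma lintegral_ofReal_ne_top {Ω : Type*} [MeasurableSpace Ω] {P : Measure Ω} {u : Ω → ℝ}
    (hu : Integrable u P) : ∫⁻ x, ENNReal.ofReal (u x) ∂P ≠ ⊤ := by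
  have hle : ∫⁻ x, ENNReal.ofReal (u x) ∂P ≤ ∫⁻ x, (‖u x‖₊ : ℝ≥0∞) ∂P := by
    refine lintegral_mono fun x => ?_
    show ENNReal.ofReal (u x) ≤ (‖u x‖₊ : ℝ≥0∞)
    rw [← enorm_eq_nnnorm, Real.enorm_eq_ofReal_abs]
    exact ENNReal.ofReal_le_ofReal (le_abs_self _)
  exact ne_top_of_le_ne_top hu.hasFiniteIntegral.ne hle

lemma eIntegral_coe {Ω : Type*} [MeasurableSpace Ω] {P : Measure Ω} {u : Ω → ℝ}
    (hu : Integrable u P) :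
    eIntegral P (fun x => ((u x : ℝ) : EReal)) = ((∫ x, u x ∂P : ℝ) : EReal) := by
  unfold eIntegral
  simp_rw [posE_coe, posE_neg_coe]
  rw [integral_eq_lintegral_pos_part_sub_lintegral_neg_part hu]
  have hA := lintegral_ofReal_ne_top hu
  have hB := lintegral_ofReal_ne_top hu.neg
  simp only [Pi.neg_apply] at hB
  rw [EReal.coe_sub, coe_toReal_ennreal hA, coe_toReal_ennreal hB]

lemma eIntegral_mono_ae {Ω : Type*} [MeasurableSpace Ω] {P : Measure Ω} {h₁ h₂ : Ω → EReal}
    (h : ∀ᵐ x ∂P, h₁ x ≤ h₂ x) : eIntegral P h₁ ≤ eIntegral P h₂ := by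
  unfold eIntegral
  have hA : ∫⁻ x, posE (h₁ x) ∂P ≤ ∫⁻ x, posE (h₂ x) ∂P :=
    lintegral_mono_ae (h.mono fun x hx => posE_mono hx)
  have hB : ∫⁻ x, posE (-(h₂ x)) ∂P ≤ ∫⁻ x, posE (-(h₁ x)) ∂P :=
    lintegral_mono_ae (h.mono fun x hx => posE_mono (EReal.neg_le_neg_iff.mpr hx))
  exact EReal.sub_le_sub (EReal.coe_ennreal_le_coe_ennreal_iff.mpr hA)
    (EReal.coe_ennreal_le_coe_ennreal_iff.mpr hB)

lemma eIntegral_congr_ae {Ω : Type*} [MeasurableSpace Ω] {P : Measure Ω} {h₁ h₂ : Ω → EReal}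
    (h : ∀ᵐ x ∂P, h₁ x = h₂ x) : eIntegral P h₁ = eIntegral P h₂ :=
  le_antisymm (eIntegral_mono_ae (h.mono fun _ hx => hx.le))
    (eIntegral_mono_ae (h.mono fun _ hx => hx.ge))

end AuxD
noncomputable section AuxE

open Filter Set Topology MeasureTheory ENNReal

lemma posE_measurable : Measurable posE := by
  have h : posE = fun x : EReal => ite (x = ⊤) (⊤ : ℝ≥0∞) (ENNReal.ofReal x.toReal) := rfl
  rw [h]
  refine Measurable.ite ?_ measurable_const (measurable_ereal_toReal.ennreal_ofReal)
  exact measurableSet_eq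

lemma posE_eq_top_iff {x : EReal} : posE x = ⊤ ↔ x = ⊤ := by
  unfold posE
  split_ifs with h
  · simp [h]
  · simp [h, ENNReal.ofReal_ne_top]

lemma eIntegral_eq_real {Ω : Type*} [MeasurableSpace Ω] {P : Measure Ω} [IsFiniteMeasure P]
    {h : Ω → EReal} (hmeas : Measurable h) (hbot : ∀ x, h x ≠ ⊥)
    {u : Ω → ℝ} (hu : Integrable u P) (hle : ∀ x, ((u x : ℝ) : EReal) ≤ h x)
    {A : ℝ} (hA : eIntegral P h = (A : EReal)) :
    (∀ᵐ x ∂P, h x = (((h x).toReal : ℝ) : EReal)) ∧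
      Integrable (fun x => (h x).toReal) P ∧ (∫ x, (h x).toReal ∂P) = A := by
  set B : ℝ≥0∞ := ∫⁻ x, posE (-(h x)) ∂P with hBdef
  have hBne : B ≠ ⊤ := by
    have hle' : B ≤ ∫⁻ x, ENNReal.ofReal (-(u x)) ∂P := by
      refine lintegral_mono fun x => ?_
      rw [← posE_neg_coe]
      exact posE_mono (EReal.neg_le_neg_iff.mpr (hle x))
    exact ne_top_of_le_ne_top (by simpa using lintegral_ofReal_ne_top hu.neg) hle'
  set Pp : ℝ≥0∞ := ∫⁻ x, posE (h x) ∂P with hPpdef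
  have hPpne : Pp ≠ ⊤ := by
    intro htop
    rw [eIntegral, ← hBdef, ← hPpdef, htop, EReal.coe_ennreal_top,
      ← coe_toReal_ennreal hBne, EReal.top_sub_coe] at hA
    exact EReal.top_ne_coe _ hA
  have haefin : ∀ᵐ x ∂P, h x ≠ ⊤ := by
    have hlt : ∀ᵐ x ∂P, posE (h x) < ⊤ :=
      ae_lt_top (posE_measurable.comp hmeas) hPpne
    exact hlt.mono fun x hx htop => by rw [htop] at hx; exact absurd (posE_eq_top_iff.mpr rfl) hx.ne
  have haecoe : ∀ᵐ x ∂P, h x = (((h x).toReal : ℝ) : EReal) :=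
    haefin.mono fun x hx => (EReal.coe_toReal hx (hbot x)).symm
  set v : Ω → ℝ := fun x => (h x).toReal with hvdef
  have hvmeas : Measurable v := measurable_ereal_toReal.comp hmeas
  have hPv : ∫⁻ x, ENNReal.ofReal (v x) ∂P = Pp := by
    rw [hPpdef]
    refine lintegral_congr_ae (haecoe.mono fun x hx => ?_)
    show ENNReal.ofReal (v x) = posE (h x)
    rw [hx, posE_coe]
  have hBv : ∫⁻ x, ENNReal.ofReal (-(v x)) ∂P = B := by
    rw [hBdef]
    refine lintegral_congr_ae (haecoe.mono fun x hx => ?_)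
    show ENNReal.ofReal (-(v x)) = posE (-(h x))
    rw [hx, posE_neg_coe]
  have hvint : Integrable v P := by
    refine ⟨hvmeas.aestronglyMeasurable, ?_⟩
    rw [HasFiniteIntegral]
    have hptw : ∀ x, (‖v x‖₊ : ℝ≥0∞) ≤ ENNReal.ofReal (v x) + ENNReal.ofReal (-(v x)) := by
      intro x
      rw [← enorm_eq_nnnorm, Real.enorm_eq_ofReal_abs]
      rcases abs_cases (v x) with ⟨heq, _⟩ | ⟨heq, _⟩
      · rw [heq]; exact le_add_right le_rfl
      · rw [heq]; exact le_add_left le_rfl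
    calc ∫⁻ x, (‖v x‖₊ : ℝ≥0∞) ∂P
        ≤ ∫⁻ x, (ENNReal.ofReal (v x) + ENNReal.ofReal (-(v x))) ∂P := lintegral_mono hptw
      _ = Pp + B := by
          rw [lintegral_add_left hvmeas.ennreal_ofReal, hPv, hBv]
      _ < ⊤ := by
          rw [ENNReal.add_lt_top]
          exact ⟨hPpne.lt_top, hBne.lt_top⟩
  have hev : eIntegral P h = ((∫ x, v x ∂P : ℝ) : EReal) := by
    rw [eIntegral_congr_ae haecoe]
    exact eIntegral_coe hvint
  rw [hA] at hev
  exact ⟨haecoe, hvint, (EReal.coe_eq_coe_iff.mp hev.symm)⟩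

end AuxE
noncomputable section AuxF

open Filter Set Topology MeasureTheory ENNReal

variable {a b : EReal} {f : ℝ → EReal}

lemma fstar_mono (hf : IsF1 a b f) (ha : (0 : EReal) ≤ a) : Monotone (fstar f) := by
  intro y y' hyy'
  refine iSup_mono fun x => ?_
  rcases lt_or_ge x 0 with hx | hx
  · have hxa : (x : EReal) < a := by
      refine lt_of_lt_of_le ?_ ha
      exact_mod_cast hx
    have htop : f x = ⊤ := hf.top_outside x (Or.inl hxa)
    have hb : ((x * y : ℝ) : EReal) - ⊤ = ⊥ := rfl
    rw [htop, hb]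
    exact bot_le
  · exact EReal.sub_le_sub (EReal.coe_le_coe_iff.mpr (by nlinarith)) le_rfl

lemma phi_mono (hf : IsF1 a b f) (hfin : ∀ y, fstar f y ≠ ⊤) (ha : (0 : EReal) ≤ a) :
    Monotone (fun y => (fstar f y).toReal) := fun y y' hyy' =>
  EReal.toReal_le_toReal (fstar_mono hf ha hyy') (fstar_ne_bot hf y) (hfin y')

lemma deriv_phi_nonneg (hf : IsF1 a b f) (hfin : ∀ y, fstar f y ≠ ⊤) (ha : (0 : EReal) ≤ a)
    (hderiv : DifferentiableAt ℝ (fun z => (fstar f z).toReal) y) :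
    0 ≤ deriv (fun z => (fstar f z).toReal) y := by
  set φ : ℝ → ℝ := fun z => (fstar f z).toReal with hφdef
  have hslope : Tendsto (slope φ y) (𝓝[>] y) (𝓝 (deriv φ y)) :=
    (hasDerivAt_iff_tendsto_slope.mp hderiv.hasDerivAt).mono_left
      (nhdsWithin_mono y fun z (hz : z ∈ Ioi y) => (LT.lt.ne' hz : z ≠ y))
  refine ge_of_tendsto hslope ?_
  filter_upwards [eventually_mem_nhdsWithin] with z hz
  rw [mem_Ioi] at hz
  rw [slope_def_field]
  apply div_nonneg _ (by linarith)
  have := phi_mono hf hfin ha (le_of_lt hz)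
  simpa [hφdef] using sub_nonneg.mpr this

lemma integrable_comp_bdd {S : Type*} [MeasurableSpace S] {P : Measure S} [IsFiniteMeasure P]
    {w : S → ℝ} (hw : Measurable w) {M : ℝ} (hwb : ∀ x, |w x| ≤ M)
    {F : ℝ → ℝ} (hF : Continuous F) : Integrable (fun x => F (w x)) P := by
  obtain ⟨K, hK⟩ :=
    (isCompact_Icc (a := -M) (b := M)).exists_bound_of_continuousOn hF.continuousOn
  refine Integrable.mono' (integrable_const K)
    ((hF.measurable.comp hw).aestronglyMeasurable) (ae_of_all _ fun x => ?_)
  have hmem : w x ∈ Icc (-M) M := by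
    have := abs_le.mp (hwb x)
    exact ⟨this.1, this.2⟩
  exact hK _ hmem

lemma integrable_bdd {S : Type*} [MeasurableSpace S] {P : Measure S} [IsFiniteMeasure P]
    {w : S → ℝ} (hw : Measurable w) {M : ℝ} (hwb : ∀ x, |w x| ≤ M) : Integrable w P := by
  refine Integrable.mono' (integrable_const M) hw.aestronglyMeasurable (ae_of_all _ fun x => ?_)
  exact hwb x

/-- The key lower bound: for any probability measure `η ≪ P`, bounded measurable `g`
and `ν : ℝ`, `E_η[g] - ν - E_P[φ(g - ν)] ≤ D_f(η‖P)`. -/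
lemma fDiv_lower {S : Type*} [MeasurableSpace S] (hf : IsF1 a b f)
    (hfin : ∀ y, fstar f y ≠ ⊤)
    (hφcont : Continuous (fun z => (fstar f z).toReal))
    {P η : Measure S} [IsProbabilityMeasure P] [IsProbabilityMeasure η] (hac : η ≪ P)
    {g : S → ℝ} (hg : Measurable g) {C : ℝ} (hgb : ∀ x, |g x| ≤ C) (ν : ℝ) :
    ((∫ x, g x ∂η - ν - ∫ x, (fstar f (g x - ν)).toReal ∂P : ℝ) : EReal)
      ≤ fDivE f η P := by
  set φ : ℝ → ℝ := fun z => (fstar f z).toReal with hφdef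
  set ρ : S → ℝ := fun x => (η.rnDeriv P x).toReal with hρdef
  have hρmeas : Measurable ρ := (Measure.measurable_rnDeriv η P).ennreal_toReal
  have hρint : Integrable ρ P := Measure.integrable_toReal_rnDeriv
  have hgν : Measurable (fun x => g x - ν) := hg.sub measurable_const
  have hgνb : ∀ x, |g x - ν| ≤ C + |ν| := fun x => by
    calc |g x - ν| ≤ |g x| + |ν| := abs_sub _ _
    _ ≤ C + |ν| := by linarith [hgb x]
  have hφint : Integrable (fun x => φ (g x - ν)) P := integrable_comp_bdd hgν hgνb hφcont
  have hmul : Integrable (fun x => ρ x * (g x - ν)) P := by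
    have := hρint.bdd_mul hgν.aestronglyMeasurable
      (c := C + |ν|) (ae_of_all _ fun x => by simpa using hgνb x)
    simpa [mul_comm] using this
  set u : S → ℝ := fun x => ρ x * (g x - ν) - φ (g x - ν) with hudef
  have huint : Integrable u P := hmul.sub hφint
  have hintu : ∫ x, u x ∂P = ∫ x, g x ∂η - ν - ∫ x, φ (g x - ν) ∂P := by
    rw [hudef]
    simp only
    rw [integral_sub hmul hφint]
    congr 1
    have hsmul : ∫ x, ρ x * (g x - ν) ∂P = ∫ x, (g x - ν) ∂η := by
      rw [← integral_rnDeriv_smul hac (f := fun x => g x - ν)]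
      simp [hρdef, smul_eq_mul]
    rw [hsmul, integral_sub (integrable_bdd hg hgb) (integrable_const ν)]
    simp
  have hptw : ∀ x, ((u x : ℝ) : EReal) ≤ f (ρ x) := fun x => by
    simpa [hudef] using FY_ineq hf hfin (ρ x) (g x - ν)
  have : eIntegral P (fun x => ((u x : ℝ) : EReal)) ≤ eIntegral P (fun x => f (ρ x)) :=
    eIntegral_mono_ae (ae_of_all _ hptw)
  rw [eIntegral_coe huint, hintu] at this
  rw [fDivE, if_pos hac]
  exact this

end AuxF
set_option maxHeartbeats 2000000


/-- Characterization of the solution of the infimal convolution problem: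
if `g* ∈ Γ` and `ν* ∈ ℝ` satisfy (1) `f((f*)'(g* - ν*)) ∈ L¹(P)`,
(2) `E_P[(f*)'(g* - ν*)] = 1`, and (3) `W^Γ(Q,η*) = E_Q[g*] - E_{η*}[g*]` where
`dη* = (f*)'(g* - ν*) dP`, then `η*` is a probability measure attaining
`inf_η {D_f(η‖P) + W^Γ(Q,η)}` and
`D_f^Γ(Q‖P) = E_Q[g*] - (ν* + E_P[f*(g* - ν*)])`; if `f` is strictly convex on `(a,b)`
then `η*` is the unique minimizer. -/
theorem stmt17 {S : Type*} [MetricSpace S] [CompleteSpace S]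
    [TopologicalSpace.SeparableSpace S] [MeasurableSpace S] [BorelSpace S]
    (a b : EReal) (f : ℝ → EReal) (hf : IsF1 a b f) (hfa : AdmissibleF f)
    (ha : (0 : EReal) ≤ a)
    (hC1 : ContDiff ℝ 1 (fun y => (fstar f y).toReal))
    (Γ : Set (S → ℝ)) (hΓ : AdmissibleGamma Γ)
    (Q P : Measure S) [IsProbabilityMeasure Q] [IsProbabilityMeasure P]
    (gs : S → ℝ) (hgs : gs ∈ Γ) (νs : ℝ)
    -- (1) `f((f*)'(g* - ν*)) ∈ L¹(P)`
    (h1 : (∀ᵐ x ∂P, f (deriv (fun y => (fstar f y).toReal) (gs x - νs)) ≠ ⊤)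
      ∧ Integrable
          (fun x => (f (deriv (fun y => (fstar f y).toReal) (gs x - νs))).toReal) P)
    -- (2) `E_P[(f*)'(g* - ν*)] = 1`
    (h2 : (∫ x, deriv (fun y => (fstar f y).toReal) (gs x - νs) ∂P) = 1)
    -- (3) `W^Γ(Q,η*) = E_Q[g*] - E_{η*}[g*]`
    (h3 : ipmW Γ Q (etaStar f P gs νs)
      = ((∫ x, gs x ∂Q : ℝ) : EReal) - ((∫ x, gs x ∂(etaStar f P gs νs) : ℝ) : EReal)) :
    IsProbabilityMeasure (etaStar f P gs νs)
    ∧ (⨅ η ∈ {η : Measure S | IsProbabilityMeasure η}, (fDivE f η P + ipmW Γ Q η))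
        = fDivE f (etaStar f P gs νs) P + ipmW Γ Q (etaStar f P gs νs)
    ∧ fGammaDiv f Γ Q P
        = ((∫ x, gs x ∂Q : ℝ) : EReal)
          - ((νs : EReal) + eIntegral P (fun x => fstar f (gs x - νs)))
    ∧ (StrictConvexOnAB a b f → ∀ η' : Measure S, IsProbabilityMeasure η' →
        fDivE f η' P + ipmW Γ Q η'
          = (⨅ η ∈ {η : Measure S | IsProbabilityMeasure η}, (fDivE f η P + ipmW Γ Q η)) →
        η' = etaStar f P gs νs) := by
  classical
  obtain ⟨hfin, -⟩ := hfa
  have hφdiff : ∀ y, DifferentiableAt ℝ (fun z => (fstar f z).toReal) y := fun y =>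
    (hC1.differentiable one_ne_zero).differentiableAt
  have hψcont : Continuous (deriv (fun z => (fstar f z).toReal)) :=
    hC1.continuous_deriv le_rfl
  have hψnonneg : ∀ y, 0 ≤ deriv (fun z => (fstar f z).toReal) y := fun y =>
    deriv_phi_nonneg hf hfin ha (hφdiff y)
  have hφcont : Continuous (fun z => (fstar f z).toReal) := hC1.continuous
  obtain ⟨hgs_cont, Cg, hgs_bdd⟩ := hΓ.2.2.1 hgs
  have hgs_meas : Measurable gs := hgs_cont.measurable
  have hw_meas : Measurable (fun x => gs x - νs) := hgs_meas.sub measurable_const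
  have hw_bdd : ∀ x, |gs x - νs| ≤ Cg + |νs| := fun x => by
    calc |gs x - νs| ≤ |gs x| + |νs| := abs_sub _ _
    _ ≤ Cg + |νs| := by linarith [hgs_bdd x]
  -- the density d
  set d : S → ℝ := fun x => deriv (fun z => (fstar f z).toReal) (gs x - νs) with hddef
  have hd_meas : Measurable d := (hψcont.measurable).comp hw_meas
  have hd_nonneg : ∀ x, 0 ≤ d x := fun x => hψnonneg _
  have hd_int : Integrable d P := integrable_comp_bdd hw_meas hw_bdd hψcont
  have hd_int2 : Integrable (fun x => d x * gs x) P := by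
    have := hd_int.bdd_mul hgs_meas.aestronglyMeasurable (c := Cg) (ae_of_all _ fun x => by
      simpa using hgs_bdd x)
    simpa [mul_comm] using this
  have hη_eq : etaStar f P gs νs = P.withDensity (fun x => ENNReal.ofReal (d x)) := rfl
  have hofReal_meas : Measurable (fun x => ENNReal.ofReal (d x)) := hd_meas.ennreal_ofReal
  -- probability measure
  have hmass : (etaStar f P gs νs) Set.univ = 1 := by
    rw [hη_eq, withDensity_apply _ MeasurableSet.univ, Measure.restrict_univ,
      ← ofReal_integral_eq_lintegral_ofReal hd_int (ae_of_all _ hd_nonneg), h2]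
    simp
  have hprob : IsProbabilityMeasure (etaStar f P gs νs) := ⟨hmass⟩
  have hη_ac : etaStar f P gs νs ≪ P := hη_eq ▸ withDensity_absolutelyContinuous P _
  have hρd : (fun x => ((etaStar f P gs νs).rnDeriv P x).toReal) =ᵐ[P] d := by
    have h := Measure.rnDeriv_withDensity P hofReal_meas
    rw [← hη_eq] at h
    filter_upwards [h] with x hx
    rw [hx, ENNReal.toReal_ofReal (hd_nonneg x)]
  -- integral of gs against etaStar
  have hAη : ∫ x, gs x ∂(etaStar f P gs νs) = ∫ x, d x * gs x ∂P := by
    rw [← integral_rnDeriv_smul hη_ac (f := gs)]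
    refine integral_congr_ae ?_
    filter_upwards [hρd] with x hx
    rw [smul_eq_mul, hx]
  -- key real quantities
  set EQ : ℝ := ∫ x, gs x ∂Q with hEQdef
  set Aη : ℝ := ∫ x, d x * gs x ∂P with hAηdef
  set Iφ : ℝ := ∫ x, (fstar f (gs x - νs)).toReal ∂P with hIφdef
  have hφint : Integrable (fun x => (fstar f (gs x - νs)).toReal) P :=
    integrable_comp_bdd hw_meas hw_bdd hφcont
  set V : ℝ := EQ - νs - Iφ with hVdef
  -- eIntegral of fstar
  have heIφ : eIntegral P (fun x => fstar f (gs x - νs)) = ((Iφ : ℝ) : EReal) := by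
    have hcongr : (fun x => fstar f (gs x - νs))
        = fun x => (((fstar f (gs x - νs)).toReal : ℝ) : EReal) := by
      funext x
      exact fstar_eq_coe hf hfin _
    rw [hcongr]
    exact eIntegral_coe hφint
  -- fDivE at etaStar
  have hdw_int : Integrable (fun x => d x * (gs x - νs)) P := by
    have := hd_int.bdd_mul hw_meas.aestronglyMeasurable (c := Cg + |νs|) (ae_of_all _ fun x => by
      simpa using hw_bdd x)
    simpa [mul_comm] using this
  have hu_eta_int : Integrable
      (fun x => d x * (gs x - νs) - (fstar f (gs x - νs)).toReal) P := hdw_int.sub hφint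
  have hint_dw : ∫ x, d x * (gs x - νs) ∂P = Aη - νs := by
    have hsplit : (fun x => d x * (gs x - νs)) = fun x => d x * gs x - νs * d x := by
      funext x; ring
    rw [hsplit, integral_sub hd_int2 (hd_int.const_mul νs), integral_const_mul, h2, hAηdef]
    ring
  have hfd : fDivE f (etaStar f P gs νs) P = ((Aη - νs - Iφ : ℝ) : EReal) := by
    rw [fDivE, if_pos hη_ac]
    have he1 : (fun x => f (((etaStar f P gs νs).rnDeriv P x).toReal))
        =ᵐ[P] fun x => ((d x * (gs x - νs) - (fstar f (gs x - νs)).toReal : ℝ) : EReal) := by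
      filter_upwards [hρd] with x hx
      rw [show f (((etaStar f P gs νs).rnDeriv P x).toReal) = f (d x) from by rw [hx]]
      exact FY_eq hf hfin (gs x - νs) (hφdiff _)
    rw [eIntegral_congr_ae he1, eIntegral_coe hu_eta_int]
    rw [integral_sub hdw_int hφint, hint_dw]
  -- the value at etaStar
  have hval : fDivE f (etaStar f P gs νs) P + ipmW Γ Q (etaStar f P gs νs)
      = ((V : ℝ) : EReal) := by
    rw [hfd, h3, hAη, ← EReal.coe_sub, ← EReal.coe_add, EReal.coe_eq_coe_iff, hVdef]
    ring
  -- ipmW is nonneg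
  have hW0 : ∀ η : Measure S, (0 : EReal) ≤ ipmW Γ Q η := by
    intro η
    have h0 : ((((∫ x, (fun _ => (0:ℝ)) x ∂Q : ℝ)) : EReal)
        - ((∫ x, (fun _ => (0:ℝ)) x ∂η : ℝ) : EReal)) ≤ ipmW Γ Q η :=
      le_iSup₂ (f := fun g (_ : g ∈ Γ) =>
        (((∫ x, g x ∂Q : ℝ) : EReal) - ((∫ x, g x ∂η : ℝ) : EReal))) (fun _ => (0:ℝ)) hΓ.1
    simpa using h0
  -- W lower bound for members of Γ
  have hWlb : ∀ (η : Measure S) (g : S → ℝ), g ∈ Γ →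
      ((∫ x, g x ∂Q - ∫ x, g x ∂η : ℝ) : EReal) ≤ ipmW Γ Q η := by
    intro η g hg
    have := le_iSup₂ (f := fun g (_ : g ∈ Γ) =>
      (((∫ x, g x ∂Q : ℝ) : EReal) - ((∫ x, g x ∂η : ℝ) : EReal))) g hg
    rw [EReal.coe_sub]
    exact this
  -- general lower bound
  have hlb : ∀ η : Measure S, IsProbabilityMeasure η →
      ((V : ℝ) : EReal) ≤ fDivE f η P + ipmW Γ Q η := by
    intro η hη
    by_cases hac : η ≪ P
    · have hD := fDiv_lower hf hfin hφcont hac hgs_meas hgs_bdd νs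
      have hW := hWlb η gs hgs
      have hsum : ((V : ℝ) : EReal)
          = ((∫ x, gs x ∂η - νs - Iφ : ℝ) : EReal)
            + ((∫ x, gs x ∂Q - ∫ x, gs x ∂η : ℝ) : EReal) := by
        rw [← EReal.coe_add, EReal.coe_eq_coe_iff, hVdef]
        ring
      rw [hsum]
      exact add_le_add hD hW
    · rw [fDivE, if_neg hac, EReal.top_add_of_ne_bot (ne_bot_of_le_ne_bot (by simp) (hW0 η))]
      exact le_top
  -- conjunct 2
  have hinf : (⨅ η ∈ {η : Measure S | IsProbabilityMeasure η}, (fDivE f η P + ipmW Γ Q η))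
      = ((V : ℝ) : EReal) := by
    apply le_antisymm
    · exact le_of_le_of_eq (iInf₂_le (etaStar f P gs νs) hprob) hval
    · exact le_iInf₂ fun η hη => hlb η hη
  -- conjunct 3
  have hΛgs : LambdaF f P gs ≤ ((νs + Iφ : ℝ) : EReal) := by
    have hle := iInf_le (fun ν : ℝ =>
      ((ν : EReal) + eIntegral P (fun x => fstar f (gs x - ν)))) νs
    rw [LambdaF]
    refine le_trans hle ?_
    rw [heIφ, ← EReal.coe_add]
  have hgd : fGammaDiv f Γ Q P = ((V : ℝ) : EReal) := by
    apply le_antisymm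
    · rw [fGammaDiv]
      refine iSup₂_le fun g hg => ?_
      obtain ⟨hg_cont, Cgg, hg_bdd⟩ := hΓ.2.2.1 hg
      have hg_meas : Measurable g := hg_cont.measurable
      -- each T ν is real and at least EQg - V
      have hTν : ∀ ν : ℝ, (((∫ x, g x ∂Q - V : ℝ)) : EReal)
          ≤ (ν : EReal) + eIntegral P (fun x => fstar f (g x - ν)) := by
        intro ν
        have hwg_meas : Measurable (fun x => g x - ν) := hg_meas.sub measurable_const
        have hwg_bdd : ∀ x, |g x - ν| ≤ Cgg + |ν| := fun x => by
          calc |g x - ν| ≤ |g x| + |ν| := abs_sub _ _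
          _ ≤ Cgg + |ν| := by linarith [hg_bdd x]
        have hφgint : Integrable (fun x => (fstar f (g x - ν)).toReal) P :=
          integrable_comp_bdd hwg_meas hwg_bdd hφcont
        have heIφg : eIntegral P (fun x => fstar f (g x - ν))
            = ((∫ x, (fstar f (g x - ν)).toReal ∂P : ℝ) : EReal) := by
          have hcongr : (fun x => fstar f (g x - ν))
              = fun x => (((fstar f (g x - ν)).toReal : ℝ) : EReal) := by
            funext x
            exact fstar_eq_coe hf hfin _
          rw [hcongr]
          exact eIntegral_coe hφgint
        rw [heIφg, ← EReal.coe_add, EReal.coe_le_coe_iff]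
        -- real inequality via lower bounds at etaStar
        have hD := fDiv_lower hf hfin hφcont hη_ac hg_meas hg_bdd ν
        rw [hfd, EReal.coe_le_coe_iff] at hD
        have hW : ∫ x, g x ∂Q - ∫ x, g x ∂(etaStar f P gs νs) ≤ EQ - Aη := by
          have h := hWlb (etaStar f P gs νs) g hg
          rw [h3, hAη, ← EReal.coe_sub, EReal.coe_le_coe_iff] at h
          exact h
        simp only [hVdef]
        linarith
      -- conclude for this g
      have hΛlb : (((∫ x, g x ∂Q - V : ℝ)) : EReal) ≤ LambdaF f P g := le_iInf hTν
      calc ((∫ x, g x ∂Q : ℝ) : EReal) - LambdaF f P g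
          ≤ ((∫ x, g x ∂Q : ℝ) : EReal) - (((∫ x, g x ∂Q - V : ℝ)) : EReal) :=
            EReal.sub_le_sub le_rfl hΛlb
        _ = ((V : ℝ) : EReal) := by
            rw [← EReal.coe_sub, EReal.coe_eq_coe_iff]
            ring
    · have hstep : ((V : ℝ) : EReal) ≤ ((∫ x, gs x ∂Q : ℝ) : EReal) - LambdaF f P gs := by
        calc ((V : ℝ) : EReal) = ((EQ : ℝ) : EReal) - ((νs + Iφ : ℝ) : EReal) := by
              rw [← EReal.coe_sub, EReal.coe_eq_coe_iff, hVdef]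
              ring
        _ ≤ ((∫ x, gs x ∂Q : ℝ) : EReal) - LambdaF f P gs := EReal.sub_le_sub le_rfl hΛgs
      refine le_trans hstep ?_
      rw [fGammaDiv]
      exact le_iSup₂ (f := fun g (_ : g ∈ Γ) =>
        (((∫ x, g x ∂Q : ℝ) : EReal) - LambdaF f P g)) gs hgs
  refine ⟨hprob, hinf.trans hval.symm, ?_, ?_⟩
  · rw [hgd, heIφ, ← EReal.coe_add, ← EReal.coe_sub, EReal.coe_eq_coe_iff, hVdef]
    ring
  -- uniqueness
  · intro hsc η' hη' heq
    rw [hinf] at heq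
    have hW0' := hW0 η'
    have hac' : η' ≪ P := by
      by_contra hac
      rw [fDivE, if_neg hac, EReal.top_add_of_ne_bot (ne_bot_of_le_ne_bot (by simp) hW0')]
        at heq
      exact EReal.top_ne_coe _ heq
    -- lower bounds
    have hD := fDiv_lower hf hfin hφcont hac' hgs_meas hgs_bdd νs
    have hW := hWlb η' gs hgs
    set Au : ℝ := ∫ x, gs x ∂η' - νs - Iφ with hAudef
    set Bu : ℝ := ∫ x, gs x ∂Q - ∫ x, gs x ∂η' with hBudef
    have hVAB : V = Au + Bu := by
      simp only [hAudef, hBudef, hVdef, hEQdef]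
      ring
    -- both parts finite and equalities hold
    have hDnebot : fDivE f η' P ≠ ⊥ := ne_bot_of_le_ne_bot (EReal.coe_ne_bot _) hD
    have hWnebot : ipmW Γ Q η' ≠ ⊥ := ne_bot_of_le_ne_bot (EReal.coe_ne_bot _) hW
    have hDnetop : fDivE f η' P ≠ ⊤ := by
      intro htop
      rw [htop, EReal.top_add_of_ne_bot hWnebot] at heq
      exact EReal.top_ne_coe _ heq
    have hWnetop : ipmW Γ Q η' ≠ ⊤ := by
      intro htop
      rw [htop, EReal.add_top_of_ne_bot hDnebot] at heq
      exact EReal.top_ne_coe _ heq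
    set dr : ℝ := (fDivE f η' P).toReal with hdrdef
    set wr : ℝ := (ipmW Γ Q η').toReal with hwrdef
    have hDr : fDivE f η' P = ((dr : ℝ) : EReal) := (EReal.coe_toReal hDnetop hDnebot).symm
    have hWr : ipmW Γ Q η' = ((wr : ℝ) : EReal) := (EReal.coe_toReal hWnetop hWnebot).symm
    have hdrge : Au ≤ dr := by
      rw [hDr, EReal.coe_le_coe_iff] at hD
      exact hD
    have hwrge : Bu ≤ wr := by
      rw [hWr, EReal.coe_le_coe_iff] at hW
      exact hW
    have hsumr : dr + wr = V := by
      rw [hDr, hWr, ← EReal.coe_add] at heq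
      exact EReal.coe_eq_coe_iff.mp heq
    have hDeq : fDivE f η' P = ((Au : ℝ) : EReal) := by
      rw [hDr, EReal.coe_eq_coe_iff]
      linarith [hVAB]
    -- equality case analysis
    set ρ : S → ℝ := fun x => (η'.rnDeriv P x).toReal with hρdef
    have hρmeas : Measurable ρ := (Measure.measurable_rnDeriv η' P).ennreal_toReal
    have hρint : Integrable ρ P := Measure.integrable_toReal_rnDeriv
    set u : S → ℝ := fun x => ρ x * (gs x - νs) - (fstar f (gs x - νs)).toReal with hudef
    have hmul : Integrable (fun x => ρ x * (gs x - νs)) P := by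
      have := hρint.bdd_mul hw_meas.aestronglyMeasurable
        (c := Cg + |νs|) (ae_of_all _ fun x => by simpa using hw_bdd x)
      simpa [mul_comm] using this
    have huint : Integrable u P := hmul.sub hφint
    have hintu : ∫ x, u x ∂P = Au := by
      rw [hudef]
      simp only
      rw [integral_sub hmul hφint]
      have hsmul : ∫ x, ρ x * (gs x - νs) ∂P = ∫ x, (gs x - νs) ∂η' := by
        rw [← integral_rnDeriv_smul hac' (f := fun x => gs x - νs)]
        simp [hρdef, smul_eq_mul]
      rw [hsmul, integral_sub (integrable_bdd hgs_meas hgs_bdd) (integrable_const νs), hAudef]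
      simp [hIφdef]
    have hfmeas : Measurable f := hf.lsc.measurable
    have hhmeas : Measurable (fun x => f (ρ x)) := hfmeas.comp hρmeas
    have hhbot : ∀ x, f (ρ x) ≠ ⊥ := fun x => hf.ne_bot _
    have hhle : ∀ x, ((u x : ℝ) : EReal) ≤ f (ρ x) := fun x => by
      simpa [hudef] using FY_ineq hf hfin (ρ x) (gs x - νs)
    have hDeq' : eIntegral P (fun x => f (ρ x)) = ((Au : ℝ) : EReal) := by
      rw [← hDeq, fDivE, if_pos hac']
    obtain ⟨haecoe, hvint, hintv⟩ := eIntegral_eq_real hhmeas hhbot huint hhle hDeq'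
    -- v = u a.e.
    have hvu : (fun x => (f (ρ x)).toReal) =ᵐ[P] u := by
      have hnonneg : 0 ≤ᵐ[P] fun x => (f (ρ x)).toReal - u x := by
        filter_upwards [haecoe] with x hx
        have := hhle x
        rw [hx, EReal.coe_le_coe_iff] at this
        simp only [Pi.zero_apply]
        linarith
      have hzero : ∫ x, ((f (ρ x)).toReal - u x) ∂P = 0 := by
        rw [integral_sub hvint huint, hintv, hintu]
        ring
      have := (integral_eq_zero_iff_of_nonneg_ae hnonneg (hvint.sub huint)).mp hzero
      filter_upwards [this] with x hx
      have : (f (ρ x)).toReal - u x = 0 := hx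
      linarith
    have hρeq : ∀ᵐ x ∂P, ρ x = d x := by
      filter_upwards [haecoe, hvu] with x hx1 hx2
      have hfρ : f (ρ x) = ((ρ x * (gs x - νs) - (fstar f (gs x - νs)).toReal : ℝ) : EReal) := by
        rw [hx1, hx2]
      have hfd' : f (d x) = ((d x * (gs x - νs) - (fstar f (gs x - νs)).toReal : ℝ) : EReal) :=
        FY_eq hf hfin (gs x - νs) (hφdiff _)
      exact FY_unique hf hfin hsc hfρ hfd'
    have hrd : η'.rnDeriv P =ᵐ[P] fun x => ENNReal.ofReal (d x) := by
      filter_upwards [hρeq, Measure.rnDeriv_lt_top η' P] with x hx hlt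
      rw [← hx, hρdef]
      exact (ENNReal.ofReal_toReal hlt.ne).symm
    calc η' = P.withDensity (η'.rnDeriv P) := (Measure.withDensity_rnDeriv_eq η' P hac').symm
    _ = P.withDensity (fun x => ENNReal.ofReal (d x)) := withDensity_congr_ae hrd
    _ = etaStar f P gs νs := rfl
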